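/- For n ≥ 1, let σ ⊆ ℝ^{n+1} be the convex cone generated by the vectors (v,1) with v ∈ {0,1}^n. Then the dual cone σ∨ = {u ∈ ℝ^{n+1} : ⟨u,x⟩ ≥ 0 for all x ∈ σ} (with respect to the standard inner product) equals the convex cone generated by the 2n vectors e_1,…,e_n and e_{n+1}−e_1,…,e_{n+1}−e_n, where e_1,…,e_{n+1} is the standard basis of ℝ^{n+1}. -/

import Mathlib

open Finset

/-- The convex cone generated by a set of vectors: all finite nonnegative
linear combinations of elements of `S`. -/
def coneGen {m : ℕ} (S : Set (Fin m → ℝ)) : Set (Fin m → ℝ) :=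
  {x | ∃ (k : ℕ) (c : Fin k → ℝ) (v : Fin k → Fin m → ℝ),
    (∀ i, 0 ≤ c i) ∧ (∀ i, v i ∈ S) ∧ x = ∑ i, c i • v i}

/-- The dual cone with respect to the standard inner product. -/
def dualCone {m : ℕ} (σ : Set (Fin m → ℝ)) : Set (Fin m → ℝ) :=
  {u | ∀ x ∈ σ, 0 ≤ ∑ i, u i * x i}

/-- The vertices `(v,1)` of the unit hypercube, `v ∈ {0,1}^n`, viewed in
`ℝ^{n+1}` with last coordinate `1`. -/
def hcVerts (n : ℕ) : Set (Fin (n + 1) → ℝ) :=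
  {x | x (Fin.last n) = 1 ∧ ∀ i, i ≠ Fin.last n → (x i = 0 ∨ x i = 1)}

/-- The `2n` generators `e_1,…,e_n` and `e_{n+1}−e_1,…,e_{n+1}−e_n` of the
dual of the cone over the hypercube. -/
def hcDualGens (n : ℕ) : Set (Fin (n + 1) → ℝ) :=
  {u | (∃ i : Fin n, u = Pi.single i.castSucc 1) ∨
    ∃ i : Fin n, u = Pi.single (Fin.last n) 1 - Pi.single i.castSucc 1}

lemma coneGen_mem' {m : ℕ} {S : Set (Fin m → ℝ)} {x : Fin m → ℝ} (hx : x ∈ S) :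
    x ∈ coneGen S :=
  ⟨1, fun _ => 1, fun _ => x, fun _ => zero_le_one, fun _ => hx, by simp⟩

lemma coneGen_add {m : ℕ} {S : Set (Fin m → ℝ)} {x y : Fin m → ℝ}
    (hx : x ∈ coneGen S) (hy : y ∈ coneGen S) : x + y ∈ coneGen S := by
  obtain ⟨k1, c1, v1, hc1, hv1, rfl⟩ := hx
  obtain ⟨k2, c2, v2, hc2, hv2, rfl⟩ := hy
  refine ⟨k1 + k2, Fin.addCases c1 c2, Fin.addCases v1 v2, ?_, ?_, ?_⟩
  · intro i; induction i using Fin.addCases <;> simp [hc1, hc2]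
  · intro i; induction i using Fin.addCases <;> simp [hv1, hv2]
  · rw [Fin.sum_univ_add]; simp

lemma coneGen_smul {m : ℕ} {S : Set (Fin m → ℝ)} {x : Fin m → ℝ} {a : ℝ}
    (ha : 0 ≤ a) (hx : x ∈ coneGen S) : a • x ∈ coneGen S := by
  obtain ⟨k, c, v, hc, hv, rfl⟩ := hx
  exact ⟨k, fun i => a * c i, v, fun i => mul_nonneg ha (hc i), hv, by
    rw [Finset.smul_sum]; simp [smul_smul]⟩

lemma coneGen_sum {m : ℕ} {S : Set (Fin m → ℝ)} {ι : Type*} (s : Finset ι)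
    (f : ι → Fin m → ℝ) (hf : ∀ i ∈ s, f i ∈ coneGen S) :
    ∑ i ∈ s, f i ∈ coneGen S := by
  classical
  induction s using Finset.induction with
  | empty => exact ⟨0, Fin.elim0, Fin.elim0, fun i => i.elim0, fun i => i.elim0, by simp⟩
  | insert _ _ h ih =>
    rw [Finset.sum_insert h]
    exact coneGen_add (hf _ (Finset.mem_insert_self _ _))
      (ih fun i hi => hf _ (Finset.mem_insert_of_mem hi))

lemma inner_coneGen {m : ℕ} {S : Set (Fin m → ℝ)} {u : Fin m → ℝ}
    (hu : u ∈ coneGen S) (x : Fin m → ℝ) (h : ∀ v ∈ S, 0 ≤ ∑ i, v i * x i) :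
    0 ≤ ∑ i, u i * x i := by
  obtain ⟨k, c, v, hc, hv, rfl⟩ := hu
  have : ∑ i, (∑ j, c j • v j) i * x i = ∑ j, c j * ∑ i, v j i * x i := by
    simp only [Finset.sum_apply, Pi.smul_apply, smul_eq_mul, Finset.mul_sum, Finset.sum_mul]
    rw [Finset.sum_comm]
    apply Finset.sum_congr rfl; intro j _
    apply Finset.sum_congr rfl; intro i _
    ring
  rw [this]
  exact Finset.sum_nonneg fun j _ => mul_nonneg (hc j) (h _ (hv j))

lemma dualCone_coneGen {m : ℕ} (S : Set (Fin m → ℝ)) :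
    dualCone (coneGen S) = {u | ∀ x ∈ S, 0 ≤ ∑ i, u i * x i} := by
  ext u
  constructor
  · intro h x hx; exact h x (coneGen_mem' hx)
  · rintro h x ⟨k, c, v, hc, hv, rfl⟩
    have : ∑ i, u i * (∑ j, c j • v j) i = ∑ j, c j * ∑ i, u i * v j i := by
      simp only [Finset.sum_apply, Pi.smul_apply, smul_eq_mul, Finset.mul_sum]
      rw [Finset.sum_comm]
      apply Finset.sum_congr rfl; intro j _
      apply Finset.sum_congr rfl; intro i _
      ring
    rw [this]
    exact Finset.sum_nonneg fun j _ => mul_nonneg (hc j) (h _ (hv j))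


theorem dual_cone_of_hypercube_cone (n : ℕ) (hn : 1 ≤ n) :
    dualCone (coneGen (hcVerts n)) = coneGen (hcDualGens n) := by
  rw [dualCone_coneGen]
  ext u
  simp only [Set.mem_setOf_eq]
  constructor
  · intro h
    set P : Fin n → ℝ := fun i => max (u i.castSucc) 0 with hP
    set N : Fin n → ℝ := fun i => max (-(u i.castSucc)) 0 with hN
    set d : ℝ := u (Fin.last n) - ∑ i, N i with hd
    have hPnn : ∀ i, 0 ≤ P i := fun i => le_max_right _ _
    have hNnn : ∀ i, 0 ≤ N i := fun i => le_max_right _ _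
    have hdnn : 0 ≤ d := by
      set x : Fin (n + 1) → ℝ :=
        fun j => if j = Fin.last n then 1 else (if u j < 0 then 1 else 0) with hx
      have hxV : x ∈ hcVerts n := by
        constructor
        · simp [hx]
        · intro i hi
          simp only [hx, if_neg hi]
          by_cases hu : u i < 0 <;> simp [hu]
      have h0 := h x hxV
      have hsum : ∑ j, u j * x j = d := by
        rw [Fin.sum_univ_castSucc]
        have hlast : u (Fin.last n) * x (Fin.last n) = u (Fin.last n) := by simp [hx]
        rw [hlast, hd]
        have hterm : ∀ i : Fin n, u i.castSucc * x i.castSucc = -(N i) := by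
          intro i
          have hne : i.castSucc ≠ Fin.last n := (Fin.castSucc_lt_last i).ne
          simp only [hx, if_neg hne, hN]
          by_cases hu : u i.castSucc < 0
          · simp [hu, max_eq_left (neg_nonneg.mpr hu.le)]
          · simp [hu, max_eq_right (neg_nonpos.mpr (not_lt.mp hu))]
        rw [Finset.sum_congr rfl fun i _ => hterm i]
        simp
        ring
      linarith [hsum ▸ h0]
    set i0 : Fin n := ⟨0, hn⟩ with hi0
    have hdecomp : u =
        (∑ i : Fin n, P i • (Pi.single i.castSucc 1 : Fin (n+1) → ℝ)) +
        ((∑ i : Fin n, N i • ((Pi.single (Fin.last n) 1 : Fin (n+1) → ℝ)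
            - Pi.single i.castSucc 1)) +
          d • ((Pi.single i0.castSucc 1 : Fin (n+1) → ℝ) +
            ((Pi.single (Fin.last n) 1 : Fin (n+1) → ℝ) - Pi.single i0.castSucc 1))) := by
      funext j
      induction j using Fin.lastCases with
      | last =>
        simp only [Pi.add_apply, Finset.sum_apply, Pi.smul_apply, Pi.sub_apply,
          smul_eq_mul, Pi.single_apply]
        have hne : ∀ i : Fin n, (Fin.last n = i.castSucc) = False := by
          intro i; simp [(Fin.castSucc_lt_last i).ne']
        simp [hne, hd]
      | cast i =>
        simp only [Pi.add_apply, Finset.sum_apply, Pi.smul_apply, Pi.sub_apply,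
          smul_eq_mul, Pi.single_apply]
        have hne : (Fin.castSucc i = Fin.last n) = False := by
          simp [(Fin.castSucc_lt_last i).ne]
        have hcs : ∀ i' : Fin n, (Fin.castSucc i = Fin.castSucc i') = (i = i') := by
          intro i'; simp [Fin.castSucc_inj]
        have hval : u i.castSucc = P i - N i := by
          simp only [hP, hN]
          rcases le_total (u i.castSucc) 0 with h' | h'
          · rw [max_eq_right h', max_eq_left (by linarith)]; ring
          · rw [max_eq_left h', max_eq_right (by linarith)]; ring
        simp only [hne, hcs, if_false, mul_zero, zero_sub, mul_ite, mul_one,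
          mul_neg, Finset.sum_ite_eq, Finset.mem_univ, if_true]
        have h1 : (∑ x : Fin n, -if i = x then N x else 0) = -N i := by
          have he : ∀ x : Fin n, (-if i = x then N x else 0)
              = (if i = x then -N x else 0) := by
            intro x; split <;> simp
          simp only [he, Finset.sum_ite_eq, Finset.mem_univ, if_true]
        rw [hval, h1, add_neg_cancel, mul_zero]
        ring
    rw [hdecomp]
    refine coneGen_add ?_ (coneGen_add ?_ ?_)
    · exact coneGen_sum _ _ fun i _ =>
        coneGen_smul (hPnn i) (coneGen_mem' (Or.inl ⟨i, rfl⟩))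
    · exact coneGen_sum _ _ fun i _ =>
        coneGen_smul (hNnn i) (coneGen_mem' (Or.inr ⟨i, rfl⟩))
    · exact coneGen_smul hdnn (coneGen_add
        (coneGen_mem' (Or.inl ⟨i0, rfl⟩)) (coneGen_mem' (Or.inr ⟨i0, rfl⟩)))
  · intro hu x hx
    apply inner_coneGen hu
    rintro g (⟨i, rfl⟩ | ⟨i, rfl⟩)
    · have hg : ∑ j, (Pi.single i.castSucc 1 : Fin (n+1) → ℝ) j * x j = x i.castSucc := by
        simp [Pi.single_apply, ite_mul]
      rw [hg]
      rcases hx.2 i.castSucc (Fin.castSucc_lt_last i).ne with h' | h' <;> simp [h']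
    · have hg : ∑ j, ((Pi.single (Fin.last n) 1 : Fin (n+1) → ℝ)
          - (Pi.single i.castSucc 1 : Fin (n+1) → ℝ)) j * x j
          = x (Fin.last n) - x i.castSucc := by
        simp [Pi.single_apply, sub_mul, ite_mul, Finset.sum_sub_distrib]
      rw [hg, hx.1]
      rcases hx.2 i.castSucc (Fin.castSucc_lt_last i).ne with h' | h' <;> simp [h']
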